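/- In the Euclidean plane ℝ², let a and b be two points and R > 0. The set S = { x ∈ ℝ² : ∃ s ∈ [0,1], ‖x − (a + s·(b − a))‖ ≤ R }, consisting of all points within distance R of the line segment from a to b, has two-dimensional Lebesgue measure equal to 2·R·‖b − a‖ + π·R². -/

import Mathlib

open MeasureTheory

namespace StadiumAux

open Set

lemma null_vline (c : ℝ) : volume {p : ℝ × ℝ | p.1 = c} = 0 := by
  have h : {p : ℝ × ℝ | p.1 = c} = ({c} : Set ℝ) ×ˢ (univ : Set ℝ) := by
    ext ⟨x, y⟩
    simp only [Set.mem_setOf_eq, Set.mem_prod, Set.mem_singleton_iff, Set.mem_univ, and_true]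
  rw [h, Measure.volume_eq_prod, Measure.prod_prod, Real.volume_singleton, zero_mul]

lemma meas_disk (c R : ℝ) : MeasurableSet {p : ℝ × ℝ | (p.1 - c) ^ 2 + p.2 ^ 2 ≤ R ^ 2} := by
  apply measurableSet_le _ measurable_const
  fun_prop

lemma meas_f (c : ℝ) : Measurable fun p : ℝ × ℝ => (p.1 - c) ^ 2 + p.2 ^ 2 := by fun_prop

lemma meas_f0 : Measurable fun p : ℝ × ℝ => p.1 ^ 2 + p.2 ^ 2 := by fun_prop

lemma sqrt_le_iff' {A R : ℝ} (hA : 0 ≤ A) (hR : 0 ≤ R) : Real.sqrt A ≤ R ↔ A ≤ R ^ 2 := by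
  constructor
  · intro h; nlinarith [Real.sq_sqrt hA, Real.sqrt_nonneg A]
  · intro h
    calc Real.sqrt A ≤ Real.sqrt (R ^ 2) := Real.sqrt_le_sqrt h
      _ = R := Real.sqrt_sq hR

lemma disk_volume (R : ℝ) (hR : 0 ≤ R) :
    volume {p : ℝ × ℝ | p.1 ^ 2 + p.2 ^ 2 ≤ R ^ 2} = ENNReal.ofReal (Real.pi * R ^ 2) := by
  have hF : MeasurePreserving (fun y : EuclideanSpace ℝ (Fin 2) => ((y 0 : ℝ), (y 1 : ℝ)))
      volume volume :=
    (volume_preserving_piFinTwo (fun _ : Fin 2 => ℝ)).comp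
      (EuclideanSpace.volume_preserving_symm_measurableEquiv_toLp (Fin 2))
  have hm : MeasurableSet {p : ℝ × ℝ | p.1 ^ 2 + p.2 ^ 2 ≤ R ^ 2} :=
    measurableSet_le meas_f0 measurable_const
  have hpre : (fun y : EuclideanSpace ℝ (Fin 2) => ((y 0 : ℝ), (y 1 : ℝ))) ⁻¹'
      {p : ℝ × ℝ | p.1 ^ 2 + p.2 ^ 2 ≤ R ^ 2} = Metric.closedBall 0 R := by
    ext y
    simp only [Set.mem_preimage, Set.mem_setOf_eq, Metric.mem_closedBall, dist_zero_right]
    rw [EuclideanSpace.norm_eq, sqrt_le_iff' (by positivity) hR]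
    simp [Fin.sum_univ_two, sq_abs]
  rw [← hF.measure_preimage hm.nullMeasurableSet, hpre, EuclideanSpace.volume_closedBall]
  rw [Fintype.card_fin]
  have h2 : ((2 : ℕ) : ℝ) / 2 + 1 = 2 := by norm_num
  rw [h2, Real.Gamma_two, Real.sq_sqrt Real.pi_nonneg, div_one,
    ← ENNReal.ofReal_pow hR, ← ENNReal.ofReal_mul (by positivity)]
  ring_nf

lemma stadium_volume_prod (L R : ℝ) (hL : 0 ≤ L) (hR : 0 < R) :
    volume {p : ℝ × ℝ | ∃ t ∈ Icc (0 : ℝ) L, (p.1 - t) ^ 2 + p.2 ^ 2 ≤ R ^ 2} =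
      ENNReal.ofReal (2 * R * L + Real.pi * R ^ 2) := by
  set Cl : Set (ℝ × ℝ) := {p | p.1 ≤ 0 ∧ p.1 ^ 2 + p.2 ^ 2 ≤ R ^ 2} with hCl
  set Cm : Set (ℝ × ℝ) := {p | 0 ≤ p.1 ∧ p.1 ^ 2 + p.2 ^ 2 ≤ R ^ 2} with hCm
  set Cr : Set (ℝ × ℝ) := {p | L ≤ p.1 ∧ (p.1 - L) ^ 2 + p.2 ^ 2 ≤ R ^ 2} with hCr
  set Rect : Set (ℝ × ℝ) := Icc (0 : ℝ) L ×ˢ Icc (-R) R with hRect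
  have hmCl : MeasurableSet Cl :=
    (measurableSet_le measurable_fst measurable_const).inter
      (measurableSet_le meas_f0 measurable_const)
  have hmCm : MeasurableSet Cm :=
    (measurableSet_le measurable_const measurable_fst).inter
      (measurableSet_le meas_f0 measurable_const)
  have hmCr : MeasurableSet Cr :=
    (measurableSet_le measurable_const measurable_fst).inter
      (measurableSet_le (meas_f L) measurable_const)
  have hmRect : MeasurableSet Rect := measurableSet_Icc.prod measurableSet_Icc
  -- decomposition
  have hU : {p : ℝ × ℝ | ∃ t ∈ Icc (0 : ℝ) L, (p.1 - t) ^ 2 + p.2 ^ 2 ≤ R ^ 2}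
      = Rect ∪ (Cl ∪ Cr) := by
    ext ⟨x, y⟩
    simp only [Set.mem_setOf_eq, Set.mem_union, hRect, Set.mem_prod, Set.mem_Icc,
      hCl, hCr, Set.mem_setOf_eq]
    constructor
    · rintro ⟨t, ⟨ht0, htL⟩, h⟩
      rcases lt_or_ge x 0 with hx | hx
      · exact Or.inr (Or.inl ⟨hx.le, by nlinarith⟩)
      rcases le_or_gt x L with hx2 | hx2
      · exact Or.inl ⟨⟨hx, hx2⟩, by nlinarith, by nlinarith⟩
      · exact Or.inr (Or.inr ⟨hx2.le, by nlinarith⟩)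
    · rintro (⟨⟨hx0, hxL⟩, hy1, hy2⟩ | ⟨hx, h⟩ | ⟨hx, h⟩)
      · exact ⟨x, ⟨hx0, hxL⟩, by nlinarith⟩
      · exact ⟨0, ⟨le_refl 0, hL⟩, by nlinarith⟩
      · exact ⟨L, ⟨hL, le_refl L⟩, by nlinarith⟩
  -- a.e. disjointness
  have hd1 : AEDisjoint volume Rect (Cl ∪ Cr) := by
    refine measure_mono_null ?_ (measure_union_null (null_vline 0) (null_vline L))
    rintro ⟨x, y⟩ ⟨hrect, hcap⟩
    simp only [hRect, Set.mem_prod, Set.mem_Icc] at hrect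
    rcases hcap with h | h
    · exact Or.inl (le_antisymm h.1 hrect.1.1)
    · exact Or.inr (le_antisymm hrect.1.2 h.1)
  have hd2 : AEDisjoint volume Cl Cr := by
    refine measure_mono_null ?_ (null_vline 0)
    rintro ⟨x, y⟩ ⟨h1, h2⟩
    exact le_antisymm h1.1 (hL.trans h2.1)
  -- volumes of the pieces
  have hvRect : volume Rect = ENNReal.ofReal (2 * R * L) := by
    rw [hRect, Measure.volume_eq_prod, Measure.prod_prod, Real.volume_Icc, Real.volume_Icc,
      ← ENNReal.ofReal_mul (by linarith)]
    ring_nf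
  have hvClCm : volume Cl = volume Cm := by
    have hneg : MeasurePreserving (Prod.map (fun x : ℝ => -x) (id : ℝ → ℝ)) volume volume := by
      rw [Measure.volume_eq_prod]
      exact (Measure.measurePreserving_neg _).prod (MeasurePreserving.id _)
    have hpre : Prod.map (fun x : ℝ => -x) (id : ℝ → ℝ) ⁻¹' Cm = Cl := by
      ext ⟨x, y⟩
      simp only [Set.mem_preimage, Prod.map, hCm, hCl, Set.mem_setOf_eq, id_eq]
      constructor
      · rintro ⟨h1, h2⟩; exact ⟨by linarith, by nlinarith⟩
      · rintro ⟨h1, h2⟩; exact ⟨by linarith, by nlinarith⟩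
    rw [← hpre, hneg.measure_preimage hmCm.nullMeasurableSet]
  have hvCrCm : volume Cr = volume Cm := by
    have htr : MeasurePreserving (Prod.map (fun x : ℝ => x - L) (id : ℝ → ℝ)) volume volume := by
      rw [Measure.volume_eq_prod]
      exact (measurePreserving_sub_right _ L).prod (MeasurePreserving.id _)
    have hpre : Prod.map (fun x : ℝ => x - L) (id : ℝ → ℝ) ⁻¹' Cm = Cr := by
      ext ⟨x, y⟩
      simp only [Set.mem_preimage, Prod.map, hCm, hCr, Set.mem_setOf_eq, id_eq]
      constructor
      · rintro ⟨h1, h2⟩; exact ⟨by linarith, h2⟩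
      · rintro ⟨h1, h2⟩; exact ⟨by linarith, h2⟩
    rw [← hpre, htr.measure_preimage hmCm.nullMeasurableSet]
  have hdisk : volume Cl + volume Cm = ENNReal.ofReal (Real.pi * R ^ 2) := by
    have hun : Cl ∪ Cm = {p : ℝ × ℝ | p.1 ^ 2 + p.2 ^ 2 ≤ R ^ 2} := by
      ext ⟨x, y⟩
      simp only [Set.mem_union, hCl, hCm, Set.mem_setOf_eq]
      constructor
      · rintro (⟨_, h⟩ | ⟨_, h⟩) <;> exact h
      · intro h
        rcases le_total x 0 with hx | hx
        · exact Or.inl ⟨hx, h⟩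
        · exact Or.inr ⟨hx, h⟩
    have hd : AEDisjoint volume Cl Cm := by
      refine measure_mono_null ?_ (null_vline 0)
      rintro ⟨x, y⟩ ⟨h1, h2⟩
      exact le_antisymm h1.1 h2.1
    rw [← measure_union₀ hmCm.nullMeasurableSet hd, hun, disk_volume R hR.le]
  rw [hU, measure_union₀ (hmCl.union hmCr).nullMeasurableSet hd1,
    measure_union₀ hmCr.nullMeasurableSet hd2, hvRect, hvCrCm, hdisk,
    ← ENNReal.ofReal_add (by positivity) (by positivity)]

end StadiumAux

/-- Lemma 1, geometric content: the set of points of `ℝ²` within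
distance `R` of the segment from `a` to `b` (a stadium/obround) has Lebesgue
measure `2·R·‖b − a‖ + π·R²`. -/
theorem stadium_area (a b : EuclideanSpace ℝ (Fin 2)) (R : ℝ) (hR : 0 < R) :
    volume {x : EuclideanSpace ℝ (Fin 2) |
        ∃ s ∈ Set.Icc (0 : ℝ) 1, ‖x - (a + s • (b - a))‖ ≤ R} =
      ENNReal.ofReal (2 * R * ‖b - a‖ + Real.pi * R ^ 2) := by
  classical
  set L : ℝ := ‖b - a‖ with hLdef
  have hL : 0 ≤ L := norm_nonneg _
  set e₁ : EuclideanSpace ℝ (Fin 2) := EuclideanSpace.single 0 1 with he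
  have he₁ : ‖e₁‖ = 1 := by simp [he, EuclideanSpace.norm_single]
  have hnorm : ‖b - a‖ = ‖L • e₁‖ := by
    rw [norm_smul, he₁, mul_one, Real.norm_eq_abs, abs_of_nonneg hL]
  set f : EuclideanSpace ℝ (Fin 2) ≃ₗᵢ[ℝ] EuclideanSpace ℝ (Fin 2) :=
    Submodule.reflection (ℝ ∙ ((b - a) - L • e₁))ᗮ with hf
  have hfv : f (b - a) = L • e₁ := Submodule.reflection_sub hnorm
  -- measure preserving map to ℝ × ℝ
  have hF : MeasurePreserving (fun y : EuclideanSpace ℝ (Fin 2) => ((y 0 : ℝ), (y 1 : ℝ)))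
      volume volume :=
    (volume_preserving_piFinTwo (fun _ : Fin 2 => ℝ)).comp
      (EuclideanSpace.volume_preserving_symm_measurableEquiv_toLp (Fin 2))
  have hg : MeasurePreserving
      (fun x : EuclideanSpace ℝ (Fin 2) => ((f (x - a) 0 : ℝ), (f (x - a) 1 : ℝ)))
      volume volume :=
    (hF.comp f.measurePreserving).comp (measurePreserving_sub_right volume a)
  -- norm computations
  have hkey : ∀ (y : EuclideanSpace ℝ (Fin 2)) (t : ℝ),
      ‖y - t • e₁‖ ≤ R ↔ (y 0 - t) ^ 2 + (y 1) ^ 2 ≤ R ^ 2 := by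
    intro y t
    rw [EuclideanSpace.norm_eq, StadiumAux.sqrt_le_iff' (by positivity) hR.le]
    have h0 : (y - t • e₁) 0 = y 0 - t := by
      simp [he, EuclideanSpace.single_apply]
    have h1 : (y - t • e₁) 1 = y 1 := by
      simp [he, EuclideanSpace.single_apply]
    rw [Fin.sum_univ_two, h0, h1]
    simp [sq_abs]
  have hnrm : ∀ (x : EuclideanSpace ℝ (Fin 2)) (s : ℝ),
      ‖x - (a + s • (b - a))‖ = ‖f (x - a) - (s * L) • e₁‖ := by
    intro x s
    rw [show x - (a + s • (b - a)) = (x - a) - s • (b - a) by abel,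
      ← f.norm_map ((x - a) - s • (b - a)), map_sub,
      show f (s • (b - a)) = s • f (b - a) from _root_.map_smul f s (b - a), hfv, smul_smul]
  -- set identification
  have hset : {x : EuclideanSpace ℝ (Fin 2) |
        ∃ s ∈ Set.Icc (0 : ℝ) 1, ‖x - (a + s • (b - a))‖ ≤ R}
      = (fun x : EuclideanSpace ℝ (Fin 2) => ((f (x - a) 0 : ℝ), (f (x - a) 1 : ℝ))) ⁻¹'
        {p : ℝ × ℝ | ∃ t ∈ Set.Icc (0 : ℝ) L, (p.1 - t) ^ 2 + p.2 ^ 2 ≤ R ^ 2} := by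
    ext x
    simp only [Set.mem_setOf_eq, Set.mem_preimage, Set.mem_Icc]
    constructor
    · rintro ⟨s, ⟨hs0, hs1⟩, hs⟩
      rw [hnrm x s, hkey] at hs
      exact ⟨s * L, ⟨mul_nonneg hs0 hL, by nlinarith⟩, hs⟩
    · rintro ⟨t, ⟨ht0, htL⟩, ht⟩
      rcases eq_or_lt_of_le hL with hL0 | hL0
      · refine ⟨0, ⟨le_refl 0, zero_le_one⟩, ?_⟩
        rw [hnrm x 0, hkey]
        have : t = 0 := le_antisymm (htL.trans hL0.symm.le) ht0
        simpa [this] using ht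
      · refine ⟨t / L, ⟨by positivity, by rw [div_le_one hL0]; exact htL⟩, ?_⟩
        rw [hnrm x (t / L), hkey, div_mul_cancel₀ t hL0.ne']
        exact ht
  rw [hset, hg.measure_preimage ?_]
  · exact StadiumAux.stadium_volume_prod L R hL hR
  · apply MeasurableSet.nullMeasurableSet
    have : {p : ℝ × ℝ | ∃ t ∈ Set.Icc (0 : ℝ) L, (p.1 - t) ^ 2 + p.2 ^ 2 ≤ R ^ 2}
        = (Set.Icc (0 : ℝ) L ×ˢ Set.Icc (-R) R) ∪
          ({p : ℝ × ℝ | p.1 ≤ 0 ∧ p.1 ^ 2 + p.2 ^ 2 ≤ R ^ 2} ∪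
           {p : ℝ × ℝ | L ≤ p.1 ∧ (p.1 - L) ^ 2 + p.2 ^ 2 ≤ R ^ 2}) := by
      ext ⟨x, y⟩
      simp only [Set.mem_setOf_eq, Set.mem_union, Set.mem_prod, Set.mem_Icc]
      constructor
      · rintro ⟨t, ⟨ht0, htL⟩, h⟩
        rcases lt_or_ge x 0 with hx | hx
        · exact Or.inr (Or.inl ⟨hx.le, by nlinarith⟩)
        rcases le_or_gt x L with hx2 | hx2
        · exact Or.inl ⟨⟨hx, hx2⟩, by nlinarith, by nlinarith⟩
        · exact Or.inr (Or.inr ⟨hx2.le, by nlinarith⟩)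
      · rintro (⟨⟨hx0, hxL⟩, hy1, hy2⟩ | ⟨hx, h⟩ | ⟨hx, h⟩)
        · exact ⟨x, ⟨hx0, hxL⟩, by nlinarith⟩
        · exact ⟨0, ⟨le_refl 0, hL⟩, by nlinarith⟩
        · exact ⟨L, ⟨hL, le_refl L⟩, by nlinarith⟩
    rw [this]
    apply (measurableSet_Icc.prod measurableSet_Icc).union
    apply MeasurableSet.union
    · exact MeasurableSet.inter (measurableSet_le measurable_fst measurable_const)
        (measurableSet_le StadiumAux.meas_f0 measurable_const)
    · exact MeasurableSet.inter (measurableSet_le measurable_const measurable_fst)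
        (measurableSet_le (StadiumAux.meas_f L) measurable_const)
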